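/- arXiv:1103.4577 — 3 statements merged into one kernel-verified Lean document; each statement's English description precedes it below -/
import Mathlib

section
/- Let S be a finite set, R ⊆ S × S a binary relation, and m a 1-bounded pseudometric on S such that for all s,t ∈ S: s R t if and only if m(s,t) = 0. Then for any distributions Δ, Θ ∈ D(S): Δ R† Θ if and only if m̂(Δ,Θ) = 0. -/
open scoped Classical

/-- A (discrete) probability distribution over a finite set `S`. -/
structure FDist (S : Type*) [Fintype S] where
  f : S → ℝ
  nonneg : ∀ s, 0 ≤ f s
  sum_one : ∑ s, f s = 1

/-- The point distribution at `s`. -/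
noncomputable def FDist.point {S : Type*} [Fintype S] (s : S) : FDist S where
  f := fun u => if u = s then 1 else 0
  nonneg := by intro u; (try simp only []); split <;> norm_num
  sum_one := by simp

/-- The lifting `R†` of a relation to distributions: the smallest relation
relating point distributions of related states and closed under convex
combinations. -/
inductive Lift {S T : Type*} [Fintype S] [Fintype T] (R : S → T → Prop) :
    FDist S → FDist T → Prop
  | point {s : S} {t : T} :
      R s t → Lift R (FDist.point s) (FDist.point t)
  | convex (I : Finset ℕ) (p : ℕ → ℝ)
      (hp : ∀ i ∈ I, 0 ≤ p i) (hsum : ∑ i ∈ I, p i = 1)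
      (Δs : ℕ → FDist S) (Θs : ℕ → FDist T)
      (h : ∀ i ∈ I, Lift R (Δs i) (Θs i))
      (Δ : FDist S) (Θ : FDist T)
      (hΔ : Δ.f = ∑ i ∈ I, p i • (Δs i).f)
      (hΘ : Θ.f = ∑ i ∈ I, p i • (Θs i).f) :
      Lift R Δ Θ

/-- The Kantorovich lifting of a pseudometric `m` on a finite set `S`:
the optimal value of the linear program minimising `∑ s t, y s t * m s t`
over couplings `y` of `Δ` and `Θ`. -/
noncomputable def kantorovich {S : Type*} [Fintype S] (m : S → S → ℝ)
    (Δ Θ : FDist S) : ℝ :=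
  sInf { c | ∃ y : S → S → ℝ,
    (∀ s t, 0 ≤ y s t) ∧
    (∀ s, ∑ t, y s t = Δ.f s) ∧
    (∀ t, ∑ s, y s t = Θ.f t) ∧
    c = ∑ s, ∑ t, y s t * m s t }

set_option linter.unusedSectionVars false
set_option linter.unusedVariables false

section KantAux

noncomputable def cmass {S : Type*} [Fintype S] (m : S → S → ℝ) (Δ : FDist S) (s : S) : ℝ :=
  ∑ u ∈ Finset.univ.filter (fun u => m s u = 0), Δ.f u

variable {S : Type*} [Fintype S] {m : S → S → ℝ}

lemma class_iff (hnonneg : ∀ s t, 0 ≤ m s t) (hsymm : ∀ s t, m s t = m t s)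
    (htriangle : ∀ s t u, m s t ≤ m s u + m u t) {s t : S} (hst : m s t = 0) :
    ∀ u, (m s u = 0 ↔ m t u = 0) := by
  intro u
  constructor
  · intro h
    have h1 := htriangle t u s
    have h2 := hsymm t s
    exact le_antisymm (by linarith) (hnonneg t u)
  · intro h
    have h1 := htriangle s u t
    have h2 := hsymm u t
    exact le_antisymm (by linarith) (hnonneg s u)

lemma cmass_point (hnonneg : ∀ s t, 0 ≤ m s t) (s₀ s : S) :
    cmass m (FDist.point s₀) s = if m s s₀ = 0 then 1 else 0 := by
  unfold cmass FDist.point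
  simp [Finset.sum_ite_eq']

lemma cmass_linear (I : Finset ℕ) (p : ℕ → ℝ) (Δs : ℕ → FDist S) (Δ : FDist S)
    (hΔ : Δ.f = ∑ i ∈ I, p i • (Δs i).f) (s : S) :
    cmass m Δ s = ∑ i ∈ I, p i * cmass m (Δs i) s := by
  unfold cmass
  rw [hΔ]
  simp only [Finset.sum_apply, Pi.smul_apply, smul_eq_mul]
  rw [Finset.sum_comm]
  simp [Finset.mul_sum]

lemma lift_cmass {R : S → S → Prop}
    (hnonneg : ∀ s t, 0 ≤ m s t) (hsymm : ∀ s t, m s t = m t s)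
    (htriangle : ∀ s t u, m s t ≤ m s u + m u t)
    (hRm : ∀ s t, R s t → m s t = 0)
    {Δ Θ : FDist S} (h : Lift R Δ Θ) : ∀ s, cmass m Δ s = cmass m Θ s := by
  induction h with
  | @point s₀ t₀ hst =>
      intro s
      rw [cmass_point hnonneg, cmass_point hnonneg]
      have hiff : m s s₀ = 0 ↔ m s t₀ = 0 := by
        rw [hsymm s s₀, hsymm s t₀]
        exact class_iff hnonneg hsymm htriangle (hRm _ _ hst) s
      simp only [hiff]
  | convex I p hp hsum Δs Θs h Δ Θ hΔ hΘ ih =>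
      intro s
      rw [cmass_linear I p Δs Δ hΔ s, cmass_linear I p Θs Θ hΘ s]
      exact Finset.sum_congr rfl fun i hi => by rw [ih i hi s]

lemma cmass_nonneg (Δ : FDist S) (s : S) : 0 ≤ cmass m Δ s :=
  Finset.sum_nonneg fun u _ => Δ.nonneg u

lemma f_le_cmass (hrefl : ∀ s, m s s = 0) (Δ : FDist S) (s : S) :
    Δ.f s ≤ cmass m Δ s := by
  apply Finset.single_le_sum (f := fun u => Δ.f u) (fun u _ => Δ.nonneg u)
  simp [hrefl s]

lemma cmass_congr (hnonneg : ∀ s t, 0 ≤ m s t) (hsymm : ∀ s t, m s t = m t s)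
    (htriangle : ∀ s t u, m s t ≤ m s u + m u t) {s t : S} (hst : m s t = 0)
    (Δ : FDist S) : cmass m Δ s = cmass m Δ t := by
  unfold cmass
  congr 1
  apply Finset.filter_congr
  intro u _
  simpa using class_iff hnonneg hsymm htriangle hst u

lemma exists_zero_coupling
    (hnonneg : ∀ s t, 0 ≤ m s t) (hrefl : ∀ s, m s s = 0)
    (hsymm : ∀ s t, m s t = m t s)
    (htriangle : ∀ s t u, m s t ≤ m s u + m u t)
    (Δ Θ : FDist S) (hP : ∀ s, cmass m Δ s = cmass m Θ s) :
    ∃ y : S → S → ℝ,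
      (∀ s t, 0 ≤ y s t) ∧
      (∀ s, ∑ t, y s t = Δ.f s) ∧
      (∀ t, ∑ s, y s t = Θ.f t) ∧
      (∀ s t, m s t ≠ 0 → y s t = 0) := by
  refine ⟨fun s t => if m s t = 0 then Δ.f s * Θ.f t / cmass m Δ s else 0,
    ?_, ?_, ?_, ?_⟩
  · intro s t
    dsimp only
    split
    · exact div_nonneg (mul_nonneg (Δ.nonneg s) (Θ.nonneg t)) (cmass_nonneg Δ s)
    · exact le_rfl
  · intro s
    dsimp only
    rw [← Finset.sum_filter]
    by_cases hC : cmass m Δ s = 0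
    · have hf : Δ.f s = 0 :=
        le_antisymm (hC ▸ f_le_cmass hrefl Δ s) (Δ.nonneg s)
      simp [hf]
    · have : ∑ t ∈ Finset.univ.filter (fun t => m s t = 0),
          Δ.f s * Θ.f t / cmass m Δ s
          = (∑ t ∈ Finset.univ.filter (fun t => m s t = 0), Θ.f t)
            * (Δ.f s / cmass m Δ s) := by
        rw [Finset.sum_mul]
        exact Finset.sum_congr rfl fun t _ => by ring
      rw [this]
      have : (∑ t ∈ Finset.univ.filter (fun t => m s t = 0), Θ.f t)
          = cmass m Δ s := (hP s).symm
      rw [this]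
      field_simp
  · intro t
    dsimp only
    rw [← Finset.sum_filter]
    have hcongr : ∀ s ∈ Finset.univ.filter (fun s => m s t = 0),
        Δ.f s * Θ.f t / cmass m Δ s = Δ.f s * (Θ.f t / cmass m Δ t) := by
      intro s hs
      rw [Finset.mem_filter] at hs
      rw [cmass_congr hnonneg hsymm htriangle hs.2 Δ]
      ring
    rw [Finset.sum_congr rfl hcongr, ← Finset.sum_mul]
    have hfil : (Finset.univ.filter (fun s => m s t = 0))
        = Finset.univ.filter (fun s => m t s = 0) := by
      apply Finset.filter_congr
      intro u _
      rw [hsymm u t]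
    rw [hfil]
    have : (∑ s ∈ Finset.univ.filter (fun s => m t s = 0), Δ.f s) = cmass m Δ t := rfl
    rw [this]
    by_cases hC : cmass m Δ t = 0
    · have hf : Θ.f t = 0 := by
        have h1 := f_le_cmass hrefl Θ t
        have h2 := hP t
        have h3 := Θ.nonneg t
        linarith
      simp [hf, hC]
    · field_simp
  · intro s t h
    dsimp only
    simp [h]

lemma exists_eps (hnonneg : ∀ s t, 0 ≤ m s t) :
    ∃ ε > (0:ℝ), ∀ s t : S, m s t ≠ 0 → ε ≤ m s t := by
  by_cases hF : (Finset.univ.filter (fun p : S × S => m p.1 p.2 ≠ 0)).Nonempty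
  · refine ⟨(Finset.univ.filter (fun p : S × S => m p.1 p.2 ≠ 0)).inf' hF
      (fun p => m p.1 p.2), ?_, ?_⟩
    · rw [gt_iff_lt, Finset.lt_inf'_iff]
      intro p hp
      rw [Finset.mem_filter] at hp
      exact lt_of_le_of_ne (hnonneg p.1 p.2) (Ne.symm hp.2)
    · intro s t h
      have hmem : (s, t) ∈ Finset.univ.filter (fun p : S × S => m p.1 p.2 ≠ 0) :=
        Finset.mem_filter.mpr ⟨Finset.mem_univ _, h⟩
      exact Finset.inf'_le (fun p : S × S => m p.1 p.2) hmem
  · refine ⟨1, one_pos, ?_⟩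
    intro s t h
    exact absurd ⟨(s, t), by simp [h]⟩ hF

/-- cost of any coupling bounds the class-mass difference -/
lemma cost_bound
    (hnonneg : ∀ s t, 0 ≤ m s t) (hsymm : ∀ s t, m s t = m t s)
    (htriangle : ∀ s t u, m s t ≤ m s u + m u t)
    {ε : ℝ} (hε : 0 < ε) (hεle : ∀ s t : S, m s t ≠ 0 → ε ≤ m s t)
    (Δ Θ : FDist S) (y : S → S → ℝ)
    (hy0 : ∀ s t, 0 ≤ y s t)
    (hy1 : ∀ s, ∑ t, y s t = Δ.f s)
    (hy2 : ∀ t, ∑ s, y s t = Θ.f t)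
    (s : S) :
    ε * |cmass m Δ s - cmass m Θ s| ≤ ∑ u, ∑ t, y u t * m u t := by
  set F : Finset S := Finset.univ.filter (fun u => m s u = 0) with hF
  set A : ℝ := ∑ u ∈ F, ∑ t ∈ Finset.univ.filter (fun t => t ∉ F), y u t with hA
  set B : ℝ := ∑ u ∈ F, ∑ v ∈ Finset.univ.filter (fun v => v ∉ F), y v u with hB
  have hmemF : ∀ u, u ∈ F ↔ m s u = 0 := by intro u; simp [hF]
  -- difference = A - B
  have hff : (Finset.univ.filter (fun t => t ∈ F)) = F := Finset.filter_univ_mem F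
  have hdiff : cmass m Δ s - cmass m Θ s = A - B := by
    have h1 : cmass m Δ s = (∑ u ∈ F, ∑ t ∈ F, y u t) + A := by
      rw [hA, ← Finset.sum_add_distrib]
      apply Finset.sum_congr rfl
      intro u hu
      rw [← hy1 u]
      conv_lhs => rw [← Finset.sum_filter_add_sum_filter_not Finset.univ (fun t => t ∈ F)
        (fun t => y u t)]
      rw [hff]
    have h2 : cmass m Θ s = (∑ u ∈ F, ∑ t ∈ F, y u t) + B := by
      have h2' : cmass m Θ s = (∑ u ∈ F, ∑ v ∈ F, y v u) + B := by
        rw [hB, ← Finset.sum_add_distrib]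
        apply Finset.sum_congr rfl
        intro u hu
        rw [← hy2 u]
        conv_lhs => rw [← Finset.sum_filter_add_sum_filter_not Finset.univ (fun v => v ∈ F)
          (fun v => y v u)]
        rw [hff]
      rw [h2', Finset.sum_comm]
    rw [h1, h2]; ring
  -- off-diagonal pairs have m ≥ ε
  have hmut : ∀ u ∈ F, ∀ t, t ∉ F → ε ≤ m u t := by
    intro u hu t ht
    apply hεle
    intro h
    rw [hmemF] at hu
    rw [hmemF] at ht
    exact ht (le_antisymm (by have := htriangle s t u; rw [hu] at this; simpa [h] using this)
      (hnonneg s t))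
  -- total cost bounds ε * A
  have hcA : ε * A ≤ ∑ u, ∑ t, y u t * m u t := by
    calc ε * A = ∑ u ∈ F, ∑ t ∈ Finset.univ.filter (fun t => t ∉ F), ε * y u t := by
          rw [hA, Finset.mul_sum]; exact Finset.sum_congr rfl fun u _ => Finset.mul_sum _ _ _
      _ ≤ ∑ u ∈ F, ∑ t ∈ Finset.univ.filter (fun t => t ∉ F), y u t * m u t := by
          apply Finset.sum_le_sum
          intro u hu
          apply Finset.sum_le_sum
          intro t ht
          rw [Finset.mem_filter] at ht
          calc ε * y u t ≤ m u t * y u t :=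
                mul_le_mul_of_nonneg_right (hmut u hu t ht.2) (hy0 u t)
            _ = y u t * m u t := mul_comm _ _
      _ ≤ ∑ u ∈ F, ∑ t, y u t * m u t := by
          apply Finset.sum_le_sum
          intro u hu
          exact Finset.sum_le_sum_of_subset_of_nonneg (Finset.filter_subset _ _)
            (fun t _ _ => mul_nonneg (hy0 u t) (hnonneg u t))
      _ ≤ ∑ u, ∑ t, y u t * m u t :=
          Finset.sum_le_sum_of_subset_of_nonneg (Finset.subset_univ F)
            (fun u _ _ => Finset.sum_nonneg fun t _ => mul_nonneg (hy0 u t) (hnonneg u t))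
  -- total cost bounds ε * B
  have hcB : ε * B ≤ ∑ u, ∑ t, y u t * m u t := by
    have hswap : B = ∑ v ∈ Finset.univ.filter (fun v => v ∉ F), ∑ u ∈ F, y v u := by
      rw [hB, Finset.sum_comm]
    calc ε * B = ∑ v ∈ Finset.univ.filter (fun v => v ∉ F), ∑ u ∈ F, ε * y v u := by
          rw [hswap, Finset.mul_sum]; exact Finset.sum_congr rfl fun v _ => Finset.mul_sum _ _ _
      _ ≤ ∑ v ∈ Finset.univ.filter (fun v => v ∉ F), ∑ u ∈ F, y v u * m v u := by
          apply Finset.sum_le_sum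
          intro v hv
          apply Finset.sum_le_sum
          intro u hu
          rw [Finset.mem_filter] at hv
          have : ε ≤ m v u := by
            rw [hsymm v u]
            exact hmut u hu v hv.2
          calc ε * y v u ≤ m v u * y v u := mul_le_mul_of_nonneg_right this (hy0 v u)
            _ = y v u * m v u := mul_comm _ _
      _ ≤ ∑ v ∈ Finset.univ.filter (fun v => v ∉ F), ∑ u, y v u * m v u := by
          apply Finset.sum_le_sum
          intro v hv
          exact Finset.sum_le_sum_of_subset_of_nonneg (Finset.subset_univ F)
            (fun u _ _ => mul_nonneg (hy0 v u) (hnonneg v u))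
      _ ≤ ∑ u, ∑ t, y u t * m u t :=
          Finset.sum_le_sum_of_subset_of_nonneg (Finset.filter_subset _ _)
            (fun v _ _ => Finset.sum_nonneg fun u _ => mul_nonneg (hy0 v u) (hnonneg v u))
  have hA0 : 0 ≤ A := Finset.sum_nonneg fun u _ => Finset.sum_nonneg fun t _ => hy0 u t
  have hB0 : 0 ≤ B := Finset.sum_nonneg fun u _ => Finset.sum_nonneg fun v _ => hy0 v u
  rw [hdiff]
  rcases abs_cases (A - B) with ⟨habs, _⟩ | ⟨habs, _⟩
  · rw [habs]
    calc ε * (A - B) ≤ ε * A := by nlinarith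
      _ ≤ _ := hcA
  · rw [habs]
    calc ε * -(A - B) ≤ ε * B := by nlinarith
      _ ≤ _ := hcB

lemma lift_of_coupling {R : S → S → Prop}
    (hRm : ∀ s t, m s t = 0 → R s t)
    (Δ Θ : FDist S) (y : S → S → ℝ)
    (hy0 : ∀ s t, 0 ≤ y s t)
    (hy1 : ∀ s, ∑ t, y s t = Δ.f s)
    (hy2 : ∀ t, ∑ s, y s t = Θ.f t)
    (hy3 : ∀ s t, m s t ≠ 0 → y s t = 0) :
    Lift R Δ Θ := by
  have hS : Nonempty S := by
    by_contra h
    rw [not_nonempty_iff] at h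
    have := Δ.sum_one
    rw [Finset.univ_eq_empty, Finset.sum_empty] at this
    norm_num at this
  set n := Fintype.card (S × S) with hn
  have hnpos : 0 < n := Fintype.card_pos
  set e := Fintype.equivFin (S × S) with he
  set dec : ℕ → S × S := fun k => e.symm ⟨k % n, Nat.mod_lt _ hnpos⟩ with hdecdef
  have hdec : ∀ st : S × S, dec ((e st : Fin n) : ℕ) = st := by
    intro st
    have hlt : ((e st : Fin n) : ℕ) < n := (e st).isLt
    simp only [hdecdef]
    have hfin : (⟨((e st : Fin n) : ℕ) % n, Nat.mod_lt _ hnpos⟩ : Fin n) = e st :=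
      Fin.ext (Nat.mod_eq_of_lt hlt)
    rw [hfin, Equiv.symm_apply_apply]
  have hinj : Function.Injective (fun st : S × S => ((e st : Fin n) : ℕ)) :=
    Fin.val_injective.comp e.injective
  set Fil : Finset (S × S) := Finset.univ.filter (fun st : S × S => m st.1 st.2 = 0) with hFil
  set I : Finset ℕ := Fil.image (fun st => ((e st : Fin n) : ℕ)) with hI
  have hzero : ∀ st : S × S, st ∉ Fil → y st.1 st.2 = 0 := by
    intro st hst
    apply hy3
    simpa [hFil] using hst
  have hsum_ext : ∀ g : S × S → ℝ, (∀ st, y st.1 st.2 = 0 → g st = 0) →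
      ∑ st ∈ Fil, g st = ∑ st : S × S, g st := by
    intro g hg
    apply Finset.sum_subset (Finset.filter_subset _ _)
    intro st _ hst
    exact hg st (hzero st hst)
  have himg : ∀ g : ℕ → ℝ, ∑ k ∈ I, g k = ∑ st ∈ Fil, g ((e st : Fin n) : ℕ) := by
    intro g
    rw [hI]
    exact Finset.sum_image (fun a _ b _ hab => hinj hab)
  apply Lift.convex I (fun k => y (dec k).1 (dec k).2) ?_ ?_
    (fun k => FDist.point (dec k).1) (fun k => FDist.point (dec k).2) ?_ Δ Θ ?_ ?_
  · intro i _
    exact hy0 _ _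
  · rw [himg]
    have : ∀ st ∈ Fil, y (dec ((e st : Fin n) : ℕ)).1 (dec ((e st : Fin n) : ℕ)).2
        = y st.1 st.2 := by
      intro st _
      rw [hdec st]
    rw [Finset.sum_congr rfl this, hsum_ext _ (fun st h => h)]
    rw [Fintype.sum_prod_type]
    rw [Finset.sum_congr rfl (fun s _ => hy1 s)]
    exact Δ.sum_one
  · intro i hi
    rw [hI, Finset.mem_image] at hi
    obtain ⟨st, hst, rfl⟩ := hi
    rw [hdec st]
    rw [hFil, Finset.mem_filter] at hst
    exact Lift.point (hRm _ _ hst.2)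
  · funext u
    rw [Finset.sum_apply]
    simp only [Pi.smul_apply, smul_eq_mul]
    rw [himg]
    have hc : ∀ st ∈ Fil,
        y (dec ((e st : Fin n) : ℕ)).1 (dec ((e st : Fin n) : ℕ)).2 *
          (FDist.point (dec ((e st : Fin n) : ℕ)).1).f u
        = y st.1 st.2 * (FDist.point st.1).f u := by
      intro st _
      rw [hdec st]
    rw [Finset.sum_congr rfl hc,
      hsum_ext _ (fun st h => by rw [h, zero_mul])]
    rw [Fintype.sum_prod_type]
    unfold FDist.point
    simp only [mul_ite, mul_one, mul_zero]
    rw [← hy1 u]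
    rw [Finset.sum_comm]
    simp [Finset.sum_ite_eq]
  · funext u
    rw [Finset.sum_apply]
    simp only [Pi.smul_apply, smul_eq_mul]
    rw [himg]
    have hc : ∀ st ∈ Fil,
        y (dec ((e st : Fin n) : ℕ)).1 (dec ((e st : Fin n) : ℕ)).2 *
          (FDist.point (dec ((e st : Fin n) : ℕ)).2).f u
        = y st.1 st.2 * (FDist.point st.2).f u := by
      intro st _
      rw [hdec st]
    rw [Finset.sum_congr rfl hc,
      hsum_ext _ (fun st h => by rw [h, zero_mul])]
    rw [Fintype.sum_prod_type]
    unfold FDist.point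
    simp only [mul_ite, mul_one, mul_zero]
    rw [← hy2 u]
    simp [Finset.sum_ite_eq]

end KantAux

/-- If the relation `R` coincides with the kernel of the 1-bounded
pseudometric `m` (i.e. `s R t ↔ m s t = 0`), then `Δ R† Θ` iff the
Kantorovich distance between `Δ` and `Θ` is `0`. -/
theorem lift_iff_kantorovich_eq_zero {S : Type*} [Fintype S]
    (R : S → S → Prop) (m : S → S → ℝ)
    (hnonneg : ∀ s t, 0 ≤ m s t) (hle_one : ∀ s t, m s t ≤ 1)
    (hrefl : ∀ s, m s s = 0) (hsymm : ∀ s t, m s t = m t s)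
    (htriangle : ∀ s t u, m s t ≤ m s u + m u t)
    (hRm : ∀ s t, R s t ↔ m s t = 0)
    (Δ Θ : FDist S) :
    Lift R Δ Θ ↔ kantorovich m Δ Θ = 0 := by
  constructor
  · intro h
    have hP := lift_cmass hnonneg hsymm htriangle (fun s t hst => (hRm s t).mp hst) h
    obtain ⟨y, hy0, hy1, hy2, hy3⟩ :=
      exists_zero_coupling hnonneg hrefl hsymm htriangle Δ Θ hP
    have hmem : (0:ℝ) ∈ { c | ∃ y : S → S → ℝ,
        (∀ s t, 0 ≤ y s t) ∧
        (∀ s, ∑ t, y s t = Δ.f s) ∧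
        (∀ t, ∑ s, y s t = Θ.f t) ∧
        c = ∑ s, ∑ t, y s t * m s t } := by
      refine ⟨y, hy0, hy1, hy2, ?_⟩
      symm
      apply Finset.sum_eq_zero
      intro s _
      apply Finset.sum_eq_zero
      intro t _
      by_cases hm : m s t = 0
      · rw [hm, mul_zero]
      · rw [hy3 s t hm, zero_mul]
    have hlb : ∀ c ∈ { c | ∃ y : S → S → ℝ,
        (∀ s t, 0 ≤ y s t) ∧
        (∀ s, ∑ t, y s t = Δ.f s) ∧
        (∀ t, ∑ s, y s t = Θ.f t) ∧
        c = ∑ s, ∑ t, y s t * m s t }, (0:ℝ) ≤ c := by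
      rintro c ⟨y', hy0', _, _, rfl⟩
      exact Finset.sum_nonneg fun s _ => Finset.sum_nonneg fun t _ =>
        mul_nonneg (hy0' s t) (hnonneg s t)
    exact le_antisymm (csInf_le ⟨0, hlb⟩ hmem) (le_csInf ⟨0, hmem⟩ hlb)
  · intro h
    obtain ⟨ε, hε, hεle⟩ := exists_eps (S := S) (m := m) hnonneg
    have hne : { c | ∃ y : S → S → ℝ,
        (∀ s t, 0 ≤ y s t) ∧
        (∀ s, ∑ t, y s t = Δ.f s) ∧
        (∀ t, ∑ s, y s t = Θ.f t) ∧
        c = ∑ s, ∑ t, y s t * m s t }.Nonempty := by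
      refine ⟨_, fun s t => Δ.f s * Θ.f t, ?_, ?_, ?_, rfl⟩
      · intro s t
        exact mul_nonneg (Δ.nonneg s) (Θ.nonneg t)
      · intro s
        rw [← Finset.mul_sum, Θ.sum_one, mul_one]
      · intro t
        rw [← Finset.sum_mul, Δ.sum_one, one_mul]
    have hP : ∀ s, cmass m Δ s = cmass m Θ s := by
      intro s
      have hb : ∀ c ∈ { c | ∃ y : S → S → ℝ,
          (∀ s t, 0 ≤ y s t) ∧
          (∀ s, ∑ t, y s t = Δ.f s) ∧
          (∀ t, ∑ s, y s t = Θ.f t) ∧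
          c = ∑ s, ∑ t, y s t * m s t },
          ε * |cmass m Δ s - cmass m Θ s| ≤ c := by
        rintro c ⟨y, hy0, hy1, hy2, rfl⟩
        exact cost_bound hnonneg hsymm htriangle hε hεle Δ Θ y hy0 hy1 hy2 s
      have hle := le_csInf hne hb
      rw [show sInf { c | ∃ y : S → S → ℝ,
          (∀ s t, 0 ≤ y s t) ∧
          (∀ s, ∑ t, y s t = Δ.f s) ∧
          (∀ t, ∑ s, y s t = Θ.f t) ∧
          c = ∑ s, ∑ t, y s t * m s t } = kantorovich m Δ Θ from rfl, h] at hle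
      have habs : |cmass m Δ s - cmass m Θ s| = 0 := by
        have h0 := abs_nonneg (cmass m Δ s - cmass m Θ s)
        nlinarith
      have := abs_eq_zero.mp habs
      linarith
    obtain ⟨y, hy0, hy1, hy2, hy3⟩ :=
      exists_zero_coupling hnonneg hrefl hsymm htriangle Δ Θ hP
    exact lift_of_coupling (fun s t hm => (hRm s t).mpr hm) Δ Θ y hy0 hy1 hy2 hy3
end

section
/- Let S be a finite set, Δ, Θ ∈ D(S), and R ⊆ S × S. The following are equivalent: (1) there exists a weight function w : S × S → [0,1] with Σ_{t} w(s,t) = Δ(s) for all s, Σ_{s} w(s,t) = Θ(t) for all t, and w(s,t) > 0 implying s R t; (2) the maximum flow in the network N(Δ,Θ,R) equals 1. -/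
open scoped Classical

/-- Nodes of the network `N(Δ,Θ,R)`: a copy `S` of the states (left layer),
a disjoint copy `S'` (right layer), a source `⊥` and a sink `⊤`. -/
abbrev Node (S : Type*) := (S ⊕ S) ⊕ Bool

/-- The source `⊥`. -/
def Node.src {S : Type*} : Node S := Sum.inr false

/-- The sink `⊤`. -/
def Node.snk {S : Type*} : Node S := Sum.inr true

/-- The capacity function of the network `N(Δ,Θ,R)`: `c(⊥,s) = Δ(s)`,
`c(s,t') = 1` whenever `s R t` (these are exactly the edges from the left to
the right layer), `c(t',⊤) = Θ(t)`, and capacity `0` on all non-edges. -/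
noncomputable def cap {S : Type*} [Fintype S] (Δ Θ : FDist S) (R : S → S → Prop) :
    Node S → Node S → ℝ := fun u v =>
  match u, v with
  | Sum.inr false, Sum.inl (Sum.inl s) => Δ.f s
  | Sum.inl (Sum.inl s), Sum.inl (Sum.inr t) => if R s t then 1 else 0
  | Sum.inl (Sum.inr t), Sum.inr true => Θ.f t
  | _, _ => 0

/-- A flow function for capacity `c`: it is nonnegative, bounded by the
capacities (hence zero on non-edges), and conserves flow at every node other
than the source and the sink. -/
def IsFlow {S : Type*} [Fintype S] (c : Node S → Node S → ℝ)
    (g : Node S → Node S → ℝ) : Prop :=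
  (∀ u v, 0 ≤ g u v ∧ g u v ≤ c u v) ∧
  (∀ v : Node S, v ≠ Node.src → v ≠ Node.snk → ∑ u, g u v = ∑ u, g v u)

/-- The flow value `F(g)` of a flow `g`: total flow out of the source minus
total flow into the source. -/
noncomputable def flowValue {S : Type*} [Fintype S] (g : Node S → Node S → ℝ) : ℝ :=
  ∑ v, g Node.src v - ∑ v, g v Node.src

/-- The maximum flow of the network with capacity `c`: the supremum of the
values of all flow functions. -/
noncomputable def maxFlow {S : Type*} [Fintype S] (c : Node S → Node S → ℝ) : ℝ :=
  sSup { F | ∃ g, IsFlow c g ∧ F = flowValue g }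

/-- The flow induced by a weight function. -/
private noncomputable def gOf {S : Type*} [Fintype S] (Δ Θ : FDist S)
    (w : S → S → ℝ) : Node S → Node S → ℝ := fun u v =>
  match u, v with
  | Sum.inr false, Sum.inl (Sum.inl s) => Δ.f s
  | Sum.inl (Sum.inl s), Sum.inl (Sum.inr t) => w s t
  | Sum.inl (Sum.inr t), Sum.inr true => Θ.f t
  | _, _ => 0

private lemma sum_le_eq {ι : Type*} [Fintype ι] {f g : ι → ℝ}
    (h : ∀ i, f i ≤ g i) (hs : ∑ i, f i = ∑ i, g i) (i : ι) : f i = g i := by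
  by_contra hne
  have hlt : f i < g i := lt_of_le_of_ne (h i) hne
  have : ∑ j, f j < ∑ j, g j :=
    Finset.sum_lt_sum (fun j _ => h j) ⟨i, Finset.mem_univ i, hlt⟩
  linarith

private lemma apply_continuous {S : Type*} (u v : Node S) :
    Continuous fun g : Node S → Node S → ℝ => g u v :=
  (continuous_apply v).comp (continuous_apply u)

/-- The set of flows is compact. -/
private lemma isCompact_flows {S : Type*} [Fintype S] (c : Node S → Node S → ℝ) :
    IsCompact {g : Node S → Node S → ℝ | IsFlow c g} := by
  have hK : IsCompact (Set.pi Set.univ fun u : Node S =>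
      Set.pi Set.univ fun v : Node S => Set.Icc 0 (c u v)) :=
    isCompact_univ_pi fun u => isCompact_univ_pi fun v => isCompact_Icc
  refine hK.of_isClosed_subset ?_ ?_
  · have h1 : IsClosed (⋂ (u : Node S) (v : Node S),
        {g : Node S → Node S → ℝ | g u v ∈ Set.Icc 0 (c u v)}) := by
      refine isClosed_iInter fun u => isClosed_iInter fun v => ?_
      exact IsClosed.preimage (apply_continuous u v) isClosed_Icc
    have h2 : IsClosed (⋂ (v : Node S),
        {g : Node S → Node S → ℝ | v ≠ Node.src → v ≠ Node.snk →
          ∑ u, g u v = ∑ u, g v u}) := by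
      refine isClosed_iInter fun v => ?_
      by_cases hv : v ≠ Node.src ∧ v ≠ Node.snk
      · have : {g : Node S → Node S → ℝ | v ≠ Node.src → v ≠ Node.snk →
            ∑ u, g u v = ∑ u, g v u} =
            {g : Node S → Node S → ℝ | ∑ u, g u v = ∑ u, g v u} := by
          ext g; simp [hv.1, hv.2]
        rw [this]
        exact isClosed_eq (continuous_finset_sum _ fun u _ => apply_continuous u v)
          (continuous_finset_sum _ fun u _ => apply_continuous v u)
      · have : {g : Node S → Node S → ℝ | v ≠ Node.src → v ≠ Node.snk →
            ∑ u, g u v = ∑ u, g v u} = Set.univ := by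
          ext g
          rcases not_and_or.mp hv with h | h <;> simp [not_not.mp h]
        rw [this]; exact isClosed_univ
    have : {g : Node S → Node S → ℝ | IsFlow c g} =
        (⋂ (u : Node S) (v : Node S),
          {g : Node S → Node S → ℝ | g u v ∈ Set.Icc 0 (c u v)}) ∩
        (⋂ (v : Node S),
          {g : Node S → Node S → ℝ | v ≠ Node.src → v ≠ Node.snk →
            ∑ u, g u v = ∑ u, g v u}) := by
      ext g
      simp only [IsFlow, Set.mem_setOf_eq, Set.mem_inter_iff, Set.mem_iInter,
        Set.mem_Icc]
    rw [this]
    exact h1.inter h2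
  · intro g hg
    simp only [Set.mem_pi, Set.mem_univ, forall_true_left, Set.mem_Icc]
    intro u v
    exact hg.1 u v

/-- If the max flow is positive then it is attained by some flow. -/
private lemma exists_flow_eq_maxFlow {S : Type*} [Fintype S]
    (c : Node S → Node S → ℝ) (hc : ∀ u v, 0 ≤ c u v) :
    ∃ g, IsFlow c g ∧ flowValue g = maxFlow c := by
  have hset : {F | ∃ g, IsFlow c g ∧ F = flowValue g} =
      flowValue '' {g : Node S → Node S → ℝ | IsFlow c g} := by
    ext F
    simp only [Set.mem_setOf_eq, Set.mem_image]
    exact ⟨fun ⟨g, h1, h2⟩ => ⟨g, h1, h2.symm⟩, fun ⟨g, h1, h2⟩ => ⟨g, h1, h2.symm⟩⟩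
  have hcont : Continuous (flowValue (S := S)) := by
    unfold flowValue
    exact Continuous.sub
      (continuous_finset_sum _ fun v _ => apply_continuous Node.src v)
      (continuous_finset_sum _ fun v _ => apply_continuous v Node.src)
  have hcomp : IsCompact (flowValue '' {g : Node S → Node S → ℝ | IsFlow c g}) :=
    (isCompact_flows c).image hcont
  have hne : (flowValue '' {g : Node S → Node S → ℝ | IsFlow c g}).Nonempty := by
    refine ⟨flowValue (fun _ _ => 0), ⟨fun _ _ => 0, ?_, rfl⟩⟩
    exact ⟨fun u v => ⟨le_refl 0, hc u v⟩, fun v _ _ => by simp⟩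
  have hmem := hcomp.sSup_mem hne
  rw [maxFlow, hset]
  obtain ⟨g, hg, hgv⟩ := hmem
  exact ⟨g, hg, hgv⟩

/-- There is a weight function for `(Δ,Θ)` w.r.t. `R` iff the maximum flow in
the network `N(Δ,Θ,R)` is `1`. -/
theorem weight_function_iff_maxFlow_one {S : Type*} [Fintype S]
    (Δ Θ : FDist S) (R : S → S → Prop) :
    (∃ w : S → S → ℝ,
        (∀ s t, 0 ≤ w s t ∧ w s t ≤ 1) ∧
        (∀ s, ∑ t, w s t = Δ.f s) ∧
        (∀ t, ∑ s, w s t = Θ.f t) ∧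
        (∀ s t, 0 < w s t → R s t)) ↔
      maxFlow (cap Δ Θ R) = 1 := by
  have hcapnn : ∀ u v, 0 ≤ cap Δ Θ R u v := by
    intro u v
    rcases u with (s | t) | (_ | _) <;> rcases v with (s' | t') | (_ | _) <;>
      simp [cap, Δ.nonneg, Θ.nonneg] <;> split <;> norm_num
  have hcap_src_sum : ∑ v, cap Δ Θ R Node.src v = 1 := by
    simp [Fintype.sum_sum_type, Fintype.sum_bool, Node.src, cap, Δ.sum_one]
  have hcap_into_src : ∀ v, cap Δ Θ R v Node.src = 0 := by
    intro v
    rcases v with (s | t) | (_ | _) <;> rfl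
  -- every flow has value at most 1
  have hub : ∀ F ∈ { F | ∃ g, IsFlow (cap Δ Θ R) g ∧ F = flowValue g }, F ≤ 1 := by
    rintro F ⟨g, ⟨hb, _⟩, rfl⟩
    have h1 : ∑ v, g Node.src v ≤ 1 := by
      rw [← hcap_src_sum]
      exact Finset.sum_le_sum fun v _ => (hb Node.src v).2
    have h2 : (0 : ℝ) ≤ ∑ v, g v Node.src :=
      Finset.sum_nonneg fun v _ => (hb v Node.src).1
    unfold flowValue
    linarith
  constructor
  · rintro ⟨w, hw01, hwΔ, hwΘ, hwR⟩
    set g := gOf Δ Θ w with hg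
    have hflow : IsFlow (cap Δ Θ R) g := by
      constructor
      · intro u v
        rcases u with (s | t) | (_ | _) <;> rcases v with (s' | t') | (_ | _) <;>
          simp [hg, gOf, cap, Δ.nonneg, Θ.nonneg]
        constructor
        · exact (hw01 s t').1
        · by_cases h : R s t'
          · simp [h]; exact (hw01 s t').2
          · simp [h]
            exact not_lt.mp fun hpos => h (hwR s t' hpos)
      · intro v hv1 hv2
        rcases v with (s | t) | (_ | _)
        · simp [hg, gOf, Fintype.sum_sum_type, Fintype.sum_bool, hwΔ s]
        · simp [hg, gOf, Fintype.sum_sum_type, Fintype.sum_bool, hwΘ t]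
        · exact absurd rfl hv1
        · exact absurd rfl hv2
    have hval : flowValue g = 1 := by
      unfold flowValue
      simp [hg, gOf, Fintype.sum_sum_type, Fintype.sum_bool, Node.src, Δ.sum_one]
    refine IsGreatest.csSup_eq ⟨⟨g, hflow, hval.symm⟩, hub⟩
  · intro hmax
    obtain ⟨g, ⟨hb, hcons⟩, hgv⟩ := exists_flow_eq_maxFlow (cap Δ Θ R) hcapnn
    rw [hmax] at hgv
    have hzero : ∀ u v, cap Δ Θ R u v = 0 → g u v = 0 := fun u v h =>
      le_antisymm (h ▸ (hb u v).2) (hb u v).1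
    have hinto_src : ∀ v, g v Node.src = 0 := fun v => hzero _ _ (hcap_into_src v)
    have hS1 : ∑ v, g Node.src v = 1 := by
      have h2 : ∑ v, g v Node.src = 0 := Finset.sum_eq_zero fun v _ => hinto_src v
      unfold flowValue at hgv
      linarith
    have hA : ∑ s, g Node.src (Sum.inl (Sum.inl s)) = 1 := by
      simp only [Fintype.sum_sum_type, Fintype.sum_bool] at hS1
      have h0 : ∀ t : S, g Node.src (Sum.inl (Sum.inr t)) = 0 := fun t =>
        hzero _ _ rfl
      have h1 : g Node.src (Sum.inr true) = 0 := hzero _ _ rfl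
      have h2 : g Node.src (Sum.inr false) = 0 := hzero _ _ rfl
      simp [h0, h1, h2] at hS1
      exact hS1
    have hsrc_eq : ∀ s, g Node.src (Sum.inl (Sum.inl s)) = Δ.f s := by
      refine sum_le_eq (fun s => ?_) (by rw [hA, Δ.sum_one])
      exact (hb Node.src (Sum.inl (Sum.inl s))).2
    refine ⟨fun s t => g (Sum.inl (Sum.inl s)) (Sum.inl (Sum.inr t)), ?_, ?_, ?_, ?_⟩
    · intro s t
      refine ⟨(hb _ _).1, le_trans (hb _ _).2 ?_⟩
      show (if R s t then (1:ℝ) else 0) ≤ 1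
      split <;> norm_num
    · intro s
      show ∑ t, g (Sum.inl (Sum.inl s)) (Sum.inl (Sum.inr t)) = Δ.f s
      have hcs := hcons (Sum.inl (Sum.inl s)) (by simp [Node.src]) (by simp [Node.snk])
      simp only [Fintype.sum_sum_type, Fintype.sum_bool] at hcs
      have hz1 : ∀ a : S, g (Sum.inl (Sum.inl a)) (Sum.inl (Sum.inl s)) = 0 :=
        fun a => hzero _ _ rfl
      have hz2 : ∀ a : S, g (Sum.inl (Sum.inr a)) (Sum.inl (Sum.inl s)) = 0 :=
        fun a => hzero _ _ rfl
      have hz3 : g (Sum.inr true) (Sum.inl (Sum.inl s)) = 0 := hzero _ _ rfl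
      have hz4 : ∀ a : S, g (Sum.inl (Sum.inl s)) (Sum.inl (Sum.inl a)) = 0 :=
        fun a => hzero _ _ rfl
      have hz5 : g (Sum.inl (Sum.inl s)) (Sum.inr true) = 0 := hzero _ _ rfl
      have hz6 : g (Sum.inl (Sum.inl s)) (Sum.inr false) = 0 := hzero _ _ rfl
      simp [hz1, hz2, hz3, hz4, hz5, hz6] at hcs
      rw [← hcs]
      exact hsrc_eq s
    · -- columns
      have hcol' : ∀ t, ∑ s, g (Sum.inl (Sum.inl s)) (Sum.inl (Sum.inr t)) =
          g (Sum.inl (Sum.inr t)) (Sum.inr true) := by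
        intro t
        have hcs := hcons (Sum.inl (Sum.inr t)) (by simp [Node.src]) (by simp [Node.snk])
        simp only [Fintype.sum_sum_type, Fintype.sum_bool] at hcs
        have hz1 : ∀ a : S, g (Sum.inl (Sum.inr a)) (Sum.inl (Sum.inr t)) = 0 :=
          fun a => hzero _ _ rfl
        have hz2 : g (Sum.inr true) (Sum.inl (Sum.inr t)) = 0 := hzero _ _ rfl
        have hz3 : g (Sum.inr false) (Sum.inl (Sum.inr t)) = 0 := hzero _ _ rfl
        have hz4 : ∀ a : S, g (Sum.inl (Sum.inr t)) (Sum.inl (Sum.inl a)) = 0 :=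
          fun a => hzero _ _ rfl
        have hz5 : ∀ a : S, g (Sum.inl (Sum.inr t)) (Sum.inl (Sum.inr a)) = 0 :=
          fun a => hzero _ _ rfl
        have hz6 : g (Sum.inl (Sum.inr t)) (Sum.inr false) = 0 := hzero _ _ rfl
        simp [hz1, hz2, hz3, hz4, hz5, hz6] at hcs
        exact hcs
      have hrow : ∀ s, ∑ t, g (Sum.inl (Sum.inl s)) (Sum.inl (Sum.inr t)) = Δ.f s := by
        intro s
        have hcs := hcons (Sum.inl (Sum.inl s)) (by simp [Node.src]) (by simp [Node.snk])
        simp only [Fintype.sum_sum_type, Fintype.sum_bool] at hcs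
        have hz1 : ∀ a : S, g (Sum.inl (Sum.inl a)) (Sum.inl (Sum.inl s)) = 0 :=
          fun a => hzero _ _ rfl
        have hz2 : ∀ a : S, g (Sum.inl (Sum.inr a)) (Sum.inl (Sum.inl s)) = 0 :=
          fun a => hzero _ _ rfl
        have hz3 : g (Sum.inr true) (Sum.inl (Sum.inl s)) = 0 := hzero _ _ rfl
        have hz4 : ∀ a : S, g (Sum.inl (Sum.inl s)) (Sum.inl (Sum.inl a)) = 0 :=
          fun a => hzero _ _ rfl
        have hz5 : g (Sum.inl (Sum.inl s)) (Sum.inr true) = 0 := hzero _ _ rfl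
        have hz6 : g (Sum.inl (Sum.inl s)) (Sum.inr false) = 0 := hzero _ _ rfl
        simp [hz1, hz2, hz3, hz4, hz5, hz6] at hcs
        rw [← hcs]
        exact hsrc_eq s
      have htot : ∑ t, g (Sum.inl (Sum.inr t)) (Sum.inr true) = ∑ t, Θ.f t := by
        rw [Θ.sum_one]
        rw [← Finset.sum_congr rfl fun t _ => hcol' t]
        rw [Finset.sum_comm]
        rw [Finset.sum_congr rfl fun s _ => hrow s, Δ.sum_one]
      have hsnk_eq : ∀ t, g (Sum.inl (Sum.inr t)) (Sum.inr true) = Θ.f t :=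
        sum_le_eq (fun t => (hb (Sum.inl (Sum.inr t)) (Sum.inr true)).2) htot
      intro t
      show ∑ s, g (Sum.inl (Sum.inl s)) (Sum.inl (Sum.inr t)) = Θ.f t
      rw [hcol' t, hsnk_eq t]
    · intro s t hpos
      have hpos' : 0 < g (Sum.inl (Sum.inl s)) (Sum.inl (Sum.inr t)) := hpos
      by_contra h
      have : g (Sum.inl (Sum.inl s)) (Sum.inl (Sum.inr t)) = 0 := by
        refine hzero _ _ ?_
        show (if R s t then (1:ℝ) else 0) = 0
        simp [h]
      linarith
end

section
/- Let S be a finite set, Δ, Θ ∈ D(S), and R ⊆ S × S. Then Δ R† Θ if and only if the maximum flow in the network N(Δ,Θ,R) is 1. -/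
open scoped Classical

section Aux

variable {S : Type*} [Fintype S]

/-- A coupling of `Δ` and `Θ` supported on `R`. -/
def IsCoupling (Δ Θ : FDist S) (R : S → S → Prop) (w : S → S → ℝ) : Prop :=
  (∀ s t, 0 ≤ w s t) ∧ (∀ s t, w s t ≠ 0 → R s t) ∧
  (∀ s, ∑ t, w s t = Δ.f s) ∧ (∀ t, ∑ s, w s t = Θ.f t)

lemma FDist.f_le_one (Δ : FDist S) (s : S) : Δ.f s ≤ 1 := by
  rw [← Δ.sum_one]
  exact Finset.single_le_sum (fun t _ => Δ.nonneg t) (Finset.mem_univ s)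

lemma sum_node (f : Node S → ℝ) :
    ∑ v, f v = (∑ s, f (Sum.inl (Sum.inl s))) + (∑ s, f (Sum.inl (Sum.inr s)))
      + f (Sum.inr false) + f (Sum.inr true) := by
  simp [Fintype.sum_sum_type, Fintype.sum_bool]; ring

/-- The flow associated to a coupling. -/
noncomputable def flowOf (Δ Θ : FDist S) (w : S → S → ℝ) : Node S → Node S → ℝ := fun u v =>
  match u, v with
  | Sum.inr false, Sum.inl (Sum.inl s) => Δ.f s
  | Sum.inl (Sum.inl s), Sum.inl (Sum.inr t) => w s t
  | Sum.inl (Sum.inr t), Sum.inr true => Θ.f t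
  | _, _ => 0

lemma lift_to_coupling {Δ Θ : FDist S} {R : S → S → Prop} (h : Lift R Δ Θ) :
    ∃ w, IsCoupling Δ Θ R w := by
  induction h with
  | @point s t hst =>
    refine ⟨fun u v => if u = s ∧ v = t then 1 else 0, fun u v => by positivity,
      fun u v huv => ?_, fun u => ?_, fun v => ?_⟩
    · by_contra hR
      exact huv (by simp only [ite_eq_right_iff]; rintro ⟨rfl, rfl⟩; exact absurd hst hR)
    · simp [FDist.point, Finset.sum_ite_eq', ite_and]
    · simp [FDist.point, Finset.sum_ite_eq', ite_and]
  | convex I p hp hsum Δs Θs h Δ Θ hΔ hΘ ih =>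
    choose w hw using ih
    refine ⟨fun u v => ∑ i ∈ I.attach, p i * w i i.2 u v, fun u v => ?_, fun u v huv => ?_,
      fun u => ?_, fun v => ?_⟩
    · exact Finset.sum_nonneg fun i _ => mul_nonneg (hp i i.2) ((hw i i.2).1 u v)
    · obtain ⟨i, -, hi⟩ := Finset.exists_ne_zero_of_sum_ne_zero huv
      exact (hw i i.2).2.1 u v fun h0 => hi (by rw [h0, mul_zero])
    · rw [Finset.sum_comm]
      have : ∀ i ∈ I.attach, ∑ v, p (i:ℕ) * w i i.2 u v = p i * (Δs i).f u := by
        intro i _; rw [← Finset.mul_sum, (hw i i.2).2.2.1]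
      rw [Finset.sum_congr rfl this, hΔ]
      simp [Finset.sum_apply, Finset.sum_attach I (fun i => p i * (Δs i).f u)]
    · rw [Finset.sum_comm]
      have : ∀ i ∈ I.attach, ∑ u, p (i:ℕ) * w i i.2 u v = p i * (Θs i).f v := by
        intro i _; rw [← Finset.mul_sum, (hw i i.2).2.2.2]
      rw [Finset.sum_congr rfl this, hΘ]
      simp [Finset.sum_apply, Finset.sum_attach I (fun i => p i * (Θs i).f v)]

lemma coupling_to_lift {Δ Θ : FDist S} {R : S → S → Prop} {w : S → S → ℝ}
    (hw : IsCoupling Δ Θ R w) : Lift R Δ Θ := by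
  obtain ⟨hnn, hR, hΔm, hΘm⟩ := hw
  have hne : Nonempty S := by
    rcases isEmpty_or_nonempty S with h | h
    · exact absurd Δ.sum_one (by simp)
    · exact h
  set n := Fintype.card (S × S) with hn
  set e : Fin n ≃ S × S := (Fintype.equivFin (S × S)).symm with he
  set pair : ℕ → S × S := fun i => if h : i < n then e ⟨i, h⟩ else (hne.some, hne.some)
    with hpair
  have sum_pair : ∀ f : S × S → ℝ, ∑ i ∈ Finset.range n, f (pair i) = ∑ q, f q := by
    intro f
    rw [← Fin.sum_univ_eq_sum_range (fun i => f (pair i)) n]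
    rw [← Equiv.sum_comp e f]
    refine Finset.sum_congr rfl fun i _ => ?_
    simp [hpair, i.2]
  refine Lift.convex ((Finset.range n).filter fun i => w (pair i).1 (pair i).2 ≠ 0)
    (fun i => w (pair i).1 (pair i).2) (fun i _ => hnn _ _) ?_
    (fun i => FDist.point (pair i).1) (fun i => FDist.point (pair i).2)
    (fun i hi => Lift.point (hR _ _ (Finset.mem_filter.1 hi).2)) Δ Θ ?_ ?_
  · refine (Finset.sum_filter_ne_zero _).trans ((sum_pair fun q => w q.1 q.2).trans ?_)
    rw [Fintype.sum_prod_type, Finset.sum_congr rfl fun s _ => hΔm s]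
    exact Δ.sum_one
  · funext u
    rw [Finset.sum_apply]
    have h1 : ∀ i ∈ Finset.range n,
        (fun i => (w (pair i).1 (pair i).2 • (FDist.point (pair i).1).f) u) i ≠ 0 →
        w (pair i).1 (pair i).2 ≠ 0 := by
      intro i _ hne0 h0; exact hne0 (by simp [h0])
    refine (Finset.sum_filter_of_ne h1).trans
      (((sum_pair fun q => (w q.1 q.2 • (FDist.point q.1).f) u)).trans ?_) |>.symm
    rw [Fintype.sum_prod_type_right, ← hΔm u]
    refine Finset.sum_congr rfl fun b _ => ?_
    simp only [Pi.smul_apply, FDist.point, smul_eq_mul, mul_ite, mul_one, mul_zero]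
    simp [Finset.sum_ite_eq]
  · funext v
    rw [Finset.sum_apply]
    have h1 : ∀ i ∈ Finset.range n,
        (fun i => (w (pair i).1 (pair i).2 • (FDist.point (pair i).2).f) v) i ≠ 0 →
        w (pair i).1 (pair i).2 ≠ 0 := by
      intro i _ hne0 h0; exact hne0 (by simp [h0])
    refine (Finset.sum_filter_of_ne h1).trans
      (((sum_pair fun q => (w q.1 q.2 • (FDist.point q.2).f) v)).trans ?_) |>.symm
    rw [Fintype.sum_prod_type, ← hΘm v]
    refine Finset.sum_congr rfl fun a _ => ?_
    simp only [Pi.smul_apply, FDist.point, smul_eq_mul, mul_ite, mul_one, mul_zero]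
    simp [Finset.sum_ite_eq]

lemma coupling_to_flow {Δ Θ : FDist S} {R : S → S → Prop} {w : S → S → ℝ}
    (hw : IsCoupling Δ Θ R w) :
    IsFlow (cap Δ Θ R) (flowOf Δ Θ w) ∧ flowValue (flowOf Δ Θ w) = 1 := by
  obtain ⟨hnn, hR, hΔm, hΘm⟩ := hw
  refine ⟨⟨fun u v => ⟨?_, ?_⟩, fun v hsrc hsnk => ?_⟩, ?_⟩
  · rcases u with ⟨s | t⟩ | (_ | _) <;> rcases v with ⟨s' | t'⟩ | (_ | _) <;>
      simp [flowOf, hnn, Δ.nonneg, Θ.nonneg]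
  · rcases u with ⟨s | t⟩ | (_ | _) <;> rcases v with ⟨s' | t'⟩ | (_ | _) <;>
      simp [flowOf, cap, Δ.nonneg, Θ.nonneg]
    · by_cases h : R s t'
      · simp only [h, if_true]
        calc w s t' ≤ ∑ t, w s t :=
              Finset.single_le_sum (fun t _ => hnn s t) (Finset.mem_univ t')
          _ = Δ.f s := hΔm s
          _ ≤ 1 := Δ.f_le_one s
      · have h0 : w s t' = 0 := by by_contra h0; exact h (hR _ _ h0)
        simp [h0, h]
  · rcases v with ⟨s | t⟩ | b
    · rw [sum_node, sum_node]
      simp [flowOf, hΔm s]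
    · rw [sum_node, sum_node]
      simp [flowOf, hΘm t]
    · cases b
      · exact absurd rfl hsrc
      · exact absurd rfl hsnk
  · unfold flowValue
    rw [sum_node, sum_node]
    simp [flowOf, Node.src, Δ.sum_one]

lemma flow_le_one {Δ Θ : FDist S} {R : S → S → Prop} {g : Node S → Node S → ℝ}
    (hg : IsFlow (cap Δ Θ R) g) : flowValue g ≤ 1 := by
  obtain ⟨hb, hcons⟩ := hg
  have h1 : ∑ v, g Node.src v ≤ 1 := by
    calc ∑ v, g Node.src v ≤ ∑ v, cap Δ Θ R Node.src v :=
          Finset.sum_le_sum fun v _ => (hb _ v).2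
      _ = 1 := by rw [sum_node]; simp [cap, Node.src, Δ.sum_one]
  have h2 : 0 ≤ ∑ v, g v Node.src := Finset.sum_nonneg fun v _ => (hb v _).1
  unfold flowValue; linarith

lemma flow_to_coupling {Δ Θ : FDist S} {R : S → S → Prop} {g : Node S → Node S → ℝ}
    (hg : IsFlow (cap Δ Θ R) g) (hv : flowValue g = 1) :
    IsCoupling Δ Θ R (fun s t => g (Sum.inl (Sum.inl s)) (Sum.inl (Sum.inr t))) := by
  obtain ⟨hb, hcons⟩ := hg
  have hz : ∀ u v, cap Δ Θ R u v = 0 → g u v = 0 :=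
    fun u v h => le_antisymm (h ▸ (hb u v).2) (hb u v).1
  have hsrc0 : ∀ v, g v Node.src = 0 := fun v =>
    hz _ _ (by rcases v with ⟨s | t⟩ | (_ | _) <;> simp [cap, Node.src])
  have hsnk0 : ∀ v, g Node.snk v = 0 := fun v =>
    hz _ _ (by rcases v with ⟨s | t⟩ | (_ | _) <;> simp [cap, Node.snk])
  have hout : ∑ v, g Node.src v = 1 := by
    have : ∑ v, g v Node.src = 0 := Finset.sum_eq_zero fun v _ => hsrc0 v
    unfold flowValue at hv; rw [this] at hv; linarith
  -- the source saturates all its edges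
  have hsrcleft : ∀ s, g Node.src (Sum.inl (Sum.inl s)) = Δ.f s := by
    have hsum1 : ∑ s, g Node.src (Sum.inl (Sum.inl s)) = ∑ s, Δ.f s := by
      rw [Δ.sum_one, ← hout, sum_node]
      have z1 : ∀ t, g Node.src (Sum.inl (Sum.inr t)) = 0 :=
        fun t => hz _ _ (by simp [cap, Node.src])
      have z2 : g Node.src (Sum.inr false) = 0 := hz _ _ (by simp [cap, Node.src])
      have z3 : g Node.src (Sum.inr true) = 0 := hz _ _ (by simp [cap, Node.src])
      simp [z1, z2, z3]
    have := (Finset.sum_eq_sum_iff_of_le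
      (fun s (_ : s ∈ Finset.univ) => by
        simpa [cap, Node.src] using (hb Node.src (Sum.inl (Sum.inl s))).2)).1 hsum1
    exact fun s => this s (Finset.mem_univ s)
  -- total conservation gives that the sink receives everything
  have hsnkin : ∑ t, g (Sum.inl (Sum.inr t)) Node.snk = 1 := by
    have tot : ∑ v, (∑ u, g u v - ∑ u, g v u) = 0 := by
      rw [Finset.sum_sub_distrib, Finset.sum_comm (f := fun u v => g u v), sub_self]
    have hsub : ({Node.src, Node.snk} : Finset (Node S)) ⊆ Finset.univ :=
      Finset.subset_univ _
    have hzero : ∀ v ∈ Finset.univ, v ∉ ({Node.src, Node.snk} : Finset (Node S)) →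
        (∑ u, g u v - ∑ u, g v u) = 0 := by
      intro v _ hv'
      simp only [Finset.mem_insert, Finset.mem_singleton, not_or] at hv'
      rw [hcons v hv'.1 hv'.2, sub_self]
    have hpair : ∑ v ∈ ({Node.src, Node.snk} : Finset (Node S)),
        (∑ u, g u v - ∑ u, g v u) = 0 := by
      rw [Finset.sum_subset hsub hzero, tot]
    rw [Finset.sum_pair (by simp [Node.src, Node.snk])] at hpair
    have e1 : ∑ u, g u Node.src = 0 := Finset.sum_eq_zero fun v _ => hsrc0 v
    have e2 : ∑ u, g Node.snk u = 0 := Finset.sum_eq_zero fun v _ => hsnk0 v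
    have e3 : ∑ u, g u Node.snk = 1 := by
      rw [e1, hout, e2] at hpair; linarith
    rw [← e3, sum_node]
    have z1 : ∀ s, g (Sum.inl (Sum.inl s)) Node.snk = 0 :=
      fun s => hz _ _ (by simp [cap, Node.snk])
    have z2 : g (Sum.inr false) Node.snk = 0 := hz _ _ (by simp [cap, Node.snk])
    have z3 : g (Sum.inr true) Node.snk = 0 := hz _ _ (by simp [cap, Node.snk])
    simp only [Node.snk] at z1 z2 z3 ⊢
    simp [z1, z2, z3]
  have hsnkright : ∀ t, g (Sum.inl (Sum.inr t)) Node.snk = Θ.f t := by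
    have hsum1 : ∑ t, g (Sum.inl (Sum.inr t)) Node.snk = ∑ t, Θ.f t := by
      rw [Θ.sum_one, hsnkin]
    have := (Finset.sum_eq_sum_iff_of_le
      (fun t (_ : t ∈ Finset.univ) => by
        simpa [cap, Node.snk] using (hb (Sum.inl (Sum.inr t)) Node.snk).2)).1 hsum1
    exact fun t => this t (Finset.mem_univ t)
  refine ⟨fun s t => (hb _ _).1, fun s t hne => ?_, fun s => ?_, fun t => ?_⟩
  · by_contra hRst
    exact hne (hz _ _ (by simp [cap, hRst]))
  · have := hcons (Sum.inl (Sum.inl s)) (by simp [Node.src]) (by simp [Node.snk])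
    rw [sum_node, sum_node] at this
    have z1 : ∀ a, g (Sum.inl (Sum.inl a)) (Sum.inl (Sum.inl s)) = 0 :=
      fun a => hz _ _ (by simp [cap])
    have z2 : ∀ a, g (Sum.inl (Sum.inr a)) (Sum.inl (Sum.inl s)) = 0 :=
      fun a => hz _ _ (by simp [cap])
    have z3 : g (Sum.inr true) (Sum.inl (Sum.inl s)) = 0 := hz _ _ (by simp [cap])
    have z4 : ∀ a, g (Sum.inl (Sum.inl s)) (Sum.inl (Sum.inl a)) = 0 :=
      fun a => hz _ _ (by simp [cap])
    have z5 : g (Sum.inl (Sum.inl s)) (Sum.inr false) = 0 := hz _ _ (by simp [cap])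
    have z6 : g (Sum.inl (Sum.inl s)) (Sum.inr true) = 0 := hz _ _ (by simp [cap])
    rw [Finset.sum_eq_zero (fun a _ => z1 a), Finset.sum_eq_zero (fun a _ => z2 a),
      Finset.sum_eq_zero (fun a _ => z4 a), z3, z5, z6] at this
    have hsl : g (Sum.inr false) (Sum.inl (Sum.inl s)) = Δ.f s := hsrcleft s
    simp only [hsl] at this
    linarith [this]
  · have := hcons (Sum.inl (Sum.inr t)) (by simp [Node.src]) (by simp [Node.snk])
    rw [sum_node, sum_node] at this
    have z1 : ∀ a, g (Sum.inl (Sum.inr a)) (Sum.inl (Sum.inr t)) = 0 :=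
      fun a => hz _ _ (by simp [cap])
    have z2 : g (Sum.inr false) (Sum.inl (Sum.inr t)) = 0 := hz _ _ (by simp [cap])
    have z3 : g (Sum.inr true) (Sum.inl (Sum.inr t)) = 0 := hz _ _ (by simp [cap])
    have z4 : ∀ a, g (Sum.inl (Sum.inr t)) (Sum.inl (Sum.inl a)) = 0 :=
      fun a => hz _ _ (by simp [cap])
    have z5 : ∀ a, g (Sum.inl (Sum.inr t)) (Sum.inl (Sum.inr a)) = 0 :=
      fun a => hz _ _ (by simp [cap])
    have z6 : g (Sum.inl (Sum.inr t)) (Sum.inr false) = 0 := hz _ _ (by simp [cap])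
    rw [Finset.sum_eq_zero (fun a _ => z1 a), Finset.sum_eq_zero (fun a _ => z4 a),
      Finset.sum_eq_zero (fun a _ => z5 a), z2, z3, z6] at this
    have hsr : g (Sum.inl (Sum.inr t)) (Sum.inr true) = Θ.f t := hsnkright t
    simp only [hsr] at this
    linarith [this]

lemma exists_max_flow (Δ Θ : FDist S) (R : S → S → Prop) :
    ∃ g, IsFlow (cap Δ Θ R) g ∧ maxFlow (cap Δ Θ R) = flowValue g := by
  set c := cap Δ Θ R with hc
  have hcnn : ∀ u v, 0 ≤ c u v := by
    rintro (⟨s | t⟩ | (_ | _)) (⟨s' | t'⟩ | (_ | _)) <;>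
      simp [hc, cap, Δ.nonneg, Θ.nonneg] <;> positivity
  set K : Set (Node S → Node S → ℝ) := {g | IsFlow c g} with hK
  have h0K : (fun _ _ => (0 : ℝ)) ∈ K := ⟨fun u v => ⟨le_refl _, hcnn u v⟩, by simp⟩
  have hKsub : K ⊆ Set.univ.pi fun u => Set.univ.pi fun v => Set.Icc 0 (c u v) := by
    intro g hg
    exact fun u _ => fun v _ => ⟨(hg.1 u v).1, (hg.1 u v).2⟩
  have hPcomp : IsCompact (Set.univ.pi fun u : Node S =>
      Set.univ.pi fun v : Node S => Set.Icc (0:ℝ) (c u v)) :=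
    isCompact_univ_pi fun u => isCompact_univ_pi fun v => isCompact_Icc
  have hev : ∀ u v : Node S, Continuous fun g : Node S → Node S → ℝ => g u v :=
    fun u v => (continuous_apply v).comp (continuous_apply u)
  have hKclosed : IsClosed K := by
    have h1 : IsClosed {g : Node S → Node S → ℝ | ∀ u v, 0 ≤ g u v ∧ g u v ≤ c u v} := by
      have : {g : Node S → Node S → ℝ | ∀ u v, 0 ≤ g u v ∧ g u v ≤ c u v} =
          ⋂ u, ⋂ v, ({g : Node S → Node S → ℝ | 0 ≤ g u v} ∩
            {g : Node S → Node S → ℝ | g u v ≤ c u v}) := by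
        ext g; simp [forall_and]
      rw [this]
      exact isClosed_iInter fun u => isClosed_iInter fun v =>
        ((isClosed_le continuous_const (hev u v)).inter
          (isClosed_le (hev u v) continuous_const))
    have h2 : IsClosed {g : Node S → Node S → ℝ |
        ∀ v : Node S, v ≠ Node.src → v ≠ Node.snk → ∑ u, g u v = ∑ u, g v u} := by
      have : {g : Node S → Node S → ℝ |
          ∀ v : Node S, v ≠ Node.src → v ≠ Node.snk → ∑ u, g u v = ∑ u, g v u} =
          ⋂ v, ⋂ (_ : v ≠ Node.src), ⋂ (_ : v ≠ Node.snk),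
            {g : Node S → Node S → ℝ | ∑ u, g u v = ∑ u, g v u} := by
        ext g; simp
      rw [this]
      refine isClosed_iInter fun v => isClosed_iInter fun _ => isClosed_iInter fun _ => ?_
      exact isClosed_eq (continuous_finset_sum _ fun u _ => hev u v)
        (continuous_finset_sum _ fun u _ => hev v u)
    exact h1.inter h2
  have hKcomp : IsCompact K := hPcomp.of_isClosed_subset hKclosed hKsub
  have hcont : Continuous (flowValue (S := S)) :=
    (continuous_finset_sum _ fun v _ => hev Node.src v).sub
      (continuous_finset_sum _ fun v _ => hev v Node.src)
  obtain ⟨g0, hg0K, hmax⟩ := hKcomp.exists_isMaxOn ⟨_, h0K⟩ hcont.continuousOn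
  refine ⟨g0, hg0K, ?_⟩
  have hub : ∀ F ∈ { F | ∃ g, IsFlow c g ∧ F = flowValue g }, F ≤ flowValue g0 := by
    rintro F ⟨g, hg, rfl⟩; exact hmax hg
  exact le_antisymm (csSup_le ⟨_, ⟨g0, hg0K, rfl⟩⟩ hub)
    (le_csSup ⟨flowValue g0, hub⟩ ⟨g0, hg0K, rfl⟩)

end Aux

/-- `Δ R† Θ` iff the maximum flow in the network `N(Δ,Θ,R)` is `1`. -/
theorem lift_iff_maxFlow_one {S : Type*} [Fintype S]
    (Δ Θ : FDist S) (R : S → S → Prop) :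
    Lift R Δ Θ ↔ maxFlow (cap Δ Θ R) = 1 := by
  constructor
  · intro h
    obtain ⟨w, hw⟩ := lift_to_coupling h
    obtain ⟨hflow, hval⟩ := coupling_to_flow hw
    have hmem : (1 : ℝ) ∈ { F | ∃ g, IsFlow (cap Δ Θ R) g ∧ F = flowValue g } :=
      ⟨flowOf Δ Θ w, hflow, hval.symm⟩
    refine le_antisymm (csSup_le ⟨1, hmem⟩ ?_) (le_csSup ⟨1, ?_⟩ hmem)
    · rintro F ⟨g, hg, rfl⟩; exact flow_le_one hg
    · rintro F ⟨g, hg, rfl⟩; exact flow_le_one hg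
  · intro h
    obtain ⟨g, hg, hval⟩ := exists_max_flow Δ Θ R
    exact coupling_to_lift (flow_to_coupling hg (by rw [← hval, h]))
end
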